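/- Let A be 1-generic with A <_T 0′, with Σ₁-correct approximation (σ_s) of strictly increasing lengths, and let S be the tree of all initial segments of the strings σ_s. Then S is an r.e. tree and A is its unique infinite path. -/

import Mathlib

/-- Finite binary strings. -/
abbrev BStr := List Bool

/-- The length-`k` initial segment of an infinite sequence, as a finite string. -/
def seg {α : Type} (A : ℕ → α) (k : ℕ) : List α := (List.range k).map A

/-- A Σ⁰₁ (r.e.) set of binary strings. -/
def Sigma01 (V : Set BStr) : Prop :=
  ∃ f : BStr → ℕ → Bool, Computable₂ f ∧ ∀ σ, σ ∈ V ↔ ∃ n, f σ n = true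

/-- A Σ⁰₂ set of binary strings. -/
def Sigma02 (V : Set BStr) : Prop :=
  ∃ f : BStr → ℕ × ℕ → Bool, Computable₂ f ∧ ∀ σ, σ ∈ V ↔ ∃ m, ∀ n, f σ (m, n) = true

/-- `A` meets the set of strings `V`. -/
def Meets (A : ℕ → Bool) (V : Set BStr) : Prop := ∃ k, seg A k ∈ V

/-- `A` avoids the set of strings `V`. -/
def Avoids (A : ℕ → Bool) (V : Set BStr) : Prop := ∃ k, ∀ τ, seg A k <+: τ → τ ∉ V

/-- `A` is 1-generic. -/
def OneGeneric (A : ℕ → Bool) : Prop := ∀ V, Sigma01 V → Meets A V ∨ Avoids A V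

/-- `A` is 2-generic. -/
def TwoGeneric (A : ℕ → Bool) : Prop := ∀ V, Sigma02 V → Meets A V ∨ Avoids A V

/-- A Turing functional: a computable, oracle-use-monotone map from finite oracle
strings to partial values. -/
structure Functional (α β : Type) [Primcodable α] [Primcodable β] where
  φ : List α → ℕ → Option β
  comp : Computable₂ φ
  mono : ∀ {σ τ : List α} {x : ℕ} {b : β}, σ <+: τ → φ σ x = some b → φ τ x = some b

/-- `Φ^A = B` (in particular `Φ^A` is total). -/
def FunApplies {α β : Type} [Primcodable α] [Primcodable β]
    (Φ : Functional α β) (A : ℕ → α) (B : ℕ → β) : Prop :=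
  ∀ x, ∃ k, Φ.φ (seg A k) x = some (B x)

/-- Turing reducibility `B ≤_T A`. -/
def TuringLE {α β : Type} [Primcodable α] [Primcodable β] (B : ℕ → β) (A : ℕ → α) : Prop :=
  ∃ Φ : Functional α β, FunApplies Φ A B

/-- Turing equivalence `B ≡_T A`. -/
def TuringEquiv {α β : Type} [Primcodable α] [Primcodable β] (B : ℕ → β) (A : ℕ → α) : Prop :=
  TuringLE B A ∧ TuringLE A B

/-- A tree: a set of strings closed under initial segments. -/
def IsTree {α : Type} (T : Set (List α)) : Prop := ∀ σ τ : List α, σ <+: τ → τ ∈ T → σ ∈ T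

/-- A recursive tree. -/
def RecTree {α : Type} [Primcodable α] (T : Set (List α)) : Prop :=
  IsTree T ∧ ∃ f : List α → Bool, Computable f ∧ ∀ σ, σ ∈ T ↔ f σ = true

/-- Every string on the tree has a proper extension on the tree. -/
def ExtendibleTree {α : Type} (T : Set (List α)) : Prop :=
  ∀ σ ∈ T, ∃ τ ∈ T, σ <+: τ ∧ σ ≠ τ

/-- The set `[T]` of infinite paths through the tree `T`. -/
def paths {α : Type} (T : Set (List α)) : Set (ℕ → α) := {X | ∀ k, seg X k ∈ T}

/-- A clopen subset of the path space: a finite union of basic cylinders. -/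
def ClopenC {α : Type} (N : Set (ℕ → α)) : Prop :=
  ∃ F : Finset (List α), N = {X | ∃ σ ∈ F, seg X σ.length = σ}

/-- A Π⁰₁ class: the set of paths through a recursive tree. -/
def Pi01C {α : Type} [Primcodable α] (P : Set (ℕ → α)) : Prop := ∃ T, RecTree T ∧ P = paths T

/-- A thin Π⁰₁ class: every Π⁰₁ subclass is the intersection with a clopen set. -/
def ThinPi01 {α : Type} [Primcodable α] (P : Set (ℕ → α)) : Prop :=
  Pi01C P ∧ ∀ Q, Pi01C Q → Q ⊆ P → ∃ N, ClopenC N ∧ Q = P ∩ N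

/-- `A` is of thin-free degree: no set Turing equivalent to `A` belongs to a thin Π⁰₁ class. -/
def ThinFreeDegree (A : ℕ → Bool) : Prop :=
  ∀ B : ℕ → Bool, TuringEquiv B A → ∀ P : Set (ℕ → Bool), ThinPi01 P → B ∉ P

open Classical in
/-- The halting problem `0′`. -/
noncomputable def K : ℕ → Bool := fun n =>
  if (Nat.Partrec.Code.eval (Denumerable.ofNat Nat.Partrec.Code n) n).Dom then true else false

/-- A recursive (limit-lemma) approximation of `A`. -/
def RecApprox (σs : ℕ → BStr) (A : ℕ → Bool) : Prop :=
  Computable σs ∧ ∀ n, ∃ s0, ∀ s ≥ s0, (σs s).take n = seg A n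

/-- `τ` is an initial segment of `A`. -/
def InitSegOf {α : Type} (τ : List α) (A : ℕ → α) : Prop := τ = seg A τ.length

/-- A recursively enumerable set of natural numbers. -/
def REset (S : Set ℕ) : Prop :=
  ∃ f : ℕ → ℕ → Bool, Computable₂ f ∧ ∀ s, s ∈ S ↔ ∃ n, f s n = true

/-- A Σ₁-correct approximation: every infinite r.e. set of stages contains a stage
whose approximating string is a true initial segment of `A`. -/
def SigmaOneCorrect (σs : ℕ → BStr) (A : ℕ → Bool) : Prop :=
  ∀ S : Set ℕ, REset S → S.Infinite → ∃ s ∈ S, InitSegOf (σs s) A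


section ApproxAux

lemma take_eq_map_range' {α : Type} [Inhabited α] (l : List α) (n : ℕ) :
    l.take n = (List.range (min n l.length)).map (fun i => l.getD i default) := by
  apply List.ext_getElem
  · simp
  · intro i h1 h2
    simp only [List.length_map, List.length_range, lt_min_iff] at h2
    simp [List.getElem_take, List.getElem_map, List.getElem_range,
      List.getD_eq_getElem?_getD, List.getElem?_eq_getElem h2.2]

theorem primrec_take' {α : Type} [Primcodable α] [Inhabited α] :
    Primrec₂ (fun (l : List α) (n : ℕ) => l.take n) := by
  have : Primrec₂ (fun (l : List α) (n : ℕ) =>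
      (List.range (min n l.length)).map (fun i => l.getD i default)) := by
    apply Primrec.list_map
      (Primrec.list_range.comp (Primrec.nat_min.comp Primrec.snd
        (Primrec.list_length.comp Primrec.fst)))
    exact (Primrec.list_getD default).comp (Primrec.fst.comp Primrec.fst) Primrec.snd
  exact this.of_eq fun l n => (take_eq_map_range' l n).symm

lemma seg_length' {α : Type} (A : ℕ → α) (k : ℕ) : (seg A k).length = k := by simp [seg]

lemma seg_take' {α : Type} (A : ℕ → α) (m k : ℕ) : (seg A m).take k = seg A (min k m) := by
  simp [seg, ← List.map_take, List.take_range]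

end ApproxAux

/-- for a Σ₁-correct approximation `(σ_s)` of a 1-generic `A <_T 0′` with
strictly increasing lengths, the set `S` of all initial segments of the `σ_s` is an
r.e. tree whose unique infinite path is `A`. -/
theorem approx_tree_unique_path (A : ℕ → Bool) (σs : ℕ → BStr) (hA : OneGeneric A)
    (hle : TuringLE A K) (hlt : ¬ TuringLE K A)
    (happ : RecApprox σs A) (hcor : SigmaOneCorrect σs A)
    (hinc : ∀ s, (σs s).length < (σs (s + 1)).length) :
    (∃ f : BStr → ℕ → Bool, Computable₂ f ∧
        ∀ τ : BStr, (∃ s, τ <+: σs s) ↔ ∃ n, f τ n = true) ∧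
    IsTree {τ : BStr | ∃ s, τ <+: σs s} ∧
    A ∈ paths {τ : BStr | ∃ s, τ <+: σs s} ∧
    paths {τ : BStr | ∃ s, τ <+: σs s} = {A} := by
  obtain ⟨hσ, happ2⟩ := happ
  have hmono : StrictMono (fun s => (σs s).length) := strictMono_nat_of_lt_succ hinc
  -- Part 1: r.e.
  have hf : Computable₂ (fun (τ : BStr) (s : ℕ) => decide (τ = (σs s).take τ.length)) := by
    have h1 : Computable (fun p : BStr × ℕ => (σs p.2).take p.1.length) :=
      primrec_take'.to_comp.comp (hσ.comp Computable.snd)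
        (Primrec.list_length.to_comp.comp Computable.fst)
    exact Primrec.eq.decide.to_comp.comp Computable.fst h1
  -- Part 3: A is a path
  have hpathA : A ∈ paths {τ : BStr | ∃ s, τ <+: σs s} := by
    intro k
    obtain ⟨s0, h0⟩ := happ2 k
    refine ⟨s0, ?_⟩
    have h1 : (σs s0).take k = seg A k := h0 _ le_rfl
    rw [← h1]
    exact List.take_prefix _ _
  refine ⟨⟨_, hf, ?_⟩, ?_, hpathA, ?_⟩
  · intro τ
    constructor
    · rintro ⟨s, h⟩
      exact ⟨s, decide_eq_true (List.prefix_iff_eq_take.mp h)⟩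
    · rintro ⟨s, h⟩
      exact ⟨s, List.prefix_iff_eq_take.mpr (of_decide_eq_true h)⟩
  · rintro σ τ hpre ⟨s, h⟩
    exact ⟨s, hpre.trans h⟩
  · ext X
    simp only [Set.mem_singleton_iff]
    constructor
    · intro hX
      funext n
      set τ : BStr := seg X (n + 1) with hτ
      set W : Set ℕ := {s | τ <+: σs s} with hW
      have hre : REset W := by
        refine ⟨fun s _ => decide (τ = (σs s).take τ.length), ?_, ?_⟩
        · exact Primrec.eq.decide.to_comp.comp (Computable.const τ)
            (primrec_take'.to_comp.comp (hσ.comp Computable.fst) (Computable.const τ.length))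
        · intro s
          constructor
          · intro hs
            exact ⟨0, decide_eq_true (List.prefix_iff_eq_take.mp hs)⟩
          · rintro ⟨m, hm⟩
            exact List.prefix_iff_eq_take.mpr (of_decide_eq_true hm)
      have hinf : W.Infinite := by
        apply Set.infinite_of_forall_exists_gt
        intro a
        obtain ⟨s, hs⟩ := hX ((σs a).length + n + 2)
        have hpre : τ <+: seg X ((σs a).length + n + 2) := by
          have h := seg_take' X ((σs a).length + n + 2) (n + 1)
          rw [min_eq_left (by omega)] at h
          rw [hτ, ← h]
          exact List.take_prefix _ _
        refine ⟨s, hpre.trans hs, ?_⟩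
        have hl : (σs a).length < (σs s).length := by
          have := hs.length_le
          rw [seg_length'] at this
          omega
        exact hmono.lt_iff_lt.mp hl
      obtain ⟨s, hsW, hseg⟩ := hcor W hre hinf
      have h2 : τ <+: seg A (σs s).length := by
        rw [InitSegOf] at hseg
        exact hseg ▸ hsW
      have hlen2 : τ.length = n + 1 := by rw [hτ, seg_length']
      have hle2 : n + 1 ≤ (σs s).length := by
        have := h2.length_le
        rwa [hlen2, seg_length'] at this
      have h3 : seg X (n + 1) = seg A (n + 1) := by
        rw [← hτ]
        have := List.prefix_iff_eq_take.mp h2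
        rw [this, hlen2, seg_take', min_eq_left hle2]
      simp only [seg] at h3
      have := List.map_inj_left.mp h3 n (by simp)
      exact this
    · rintro rfl
      exact hpathA
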